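/- Let A be a symmetric positive definite real 3×3 matrix and Ā := (1/2)(tr(A)I₃ − A) with largest eigenvalue λ_M^Ā. Then for every T ∈ SO(3): ‖ψ(A·T)‖² ≤ (λ_M^Ā)² · tr(I₃ − T). In particular ‖ψ(A·T)‖ ≤ 2λ_M^Ā for all T ∈ SO(3). -/

import Mathlib

open Matrix

noncomputable section

abbrev M3 : Type := Matrix (Fin 3) (Fin 3) ℝ
abbrev V3 : Type := Fin 3 → ℝ

/-- skew-symmetric matrix associated to `x`: `skew x *ᵥ y = x ×₃ y`. -/
def skew (x : V3) : M3 :=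
  !![0, -x 2, x 1; x 2, 0, -x 0; -x 1, x 0, 0]

/-- the special orthogonal group SO(3) as a subset of 3×3 matrices -/
def SO3 : Set M3 := {R | Rᵀ * R = 1 ∧ R.det = 1}

/-- Rodrigues formula -/
def Ra (θ : ℝ) (u : V3) : M3 :=
  1 + Real.sin θ • skew u + (1 - Real.cos θ) • (skew u * skew u)

/-- `psi M = vec (P_a M)`, the vector part of the antisymmetric projection -/
def psi (M : M3) : V3 :=
  ![(M 2 1 - M 1 2) / 2, (M 0 2 - M 2 0) / 2, (M 1 0 - M 0 1) / 2]

/-- the angular-warping transformation `T(R,θ) = R · Ra(θ,u)` -/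
def Tmap (u : V3) (R : M3) (θ : ℝ) : M3 := R * Ra θ u

/-- the potential function `U(R,θ)` on SO(3) × ℝ -/
def Ufun (A : M3) (u : V3) (γ : ℝ) (R : M3) (θ : ℝ) : ℝ :=
  (A * (1 - Tmap u R θ)).trace + γ / 2 * θ ^ 2

/-- Euclidean norm on ℝ³ -/
def enorm3 (x : V3) : ℝ := Real.sqrt (x ⬝ᵥ x)

/-- Frobenius norm of a 3×3 matrix -/
def fnorm (M : M3) : ℝ := Real.sqrt ((Mᵀ * M).trace)

/-- `E(M) := (tr(M) I − Mᵀ)/2` -/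
def Emap (M : M3) : M3 := (2⁻¹ : ℝ) • (M.trace • (1 : M3) - Mᵀ)

/-- `D_R(R,θ)` from Lemma 2 -/
def DR (A : M3) (u : V3) (R : M3) (θ : ℝ) : M3 :=
  Ra θ u * Emap (A * Tmap u R θ) * (Ra θ u)ᵀ

/-- `D_θ(R,θ)` from Lemma 2 -/
def Dθ (A : M3) (u : V3) (R : M3) (θ : ℝ) : V3 :=
  (Ra θ u * Emap (A * Tmap u R θ)) *ᵥ u - skew (Ra θ u *ᵥ psi (A * Tmap u R θ)) *ᵥ u

/-- Δ(v,u) from the construction of the synergistic gap -/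
def Delta (A : M3) (v u : V3) : ℝ :=
  u ⬝ᵥ ((A.trace • (1 : M3) - A - (2 * (v ⬝ᵥ A *ᵥ v)) • ((1 : M3) - vecMulVec v v)) *ᵥ u)

/-- `v` is a unit eigenvector of `A` -/
def IsUnitEigen (A : M3) (v : V3) : Prop :=
  v ⬝ᵥ v = 1 ∧ ∃ lam : ℝ, A *ᵥ v = lam • v

/-- Ā := (tr(A) I − A)/2 -/
def Abar (A : M3) : M3 := (2⁻¹ : ℝ) • (A.trace • (1 : M3) - A)

/-- `lam` is an eigenvalue of `M` -/
def IsEigen (M : M3) (lam : ℝ) : Prop := ∃ w : V3, w ≠ 0 ∧ M *ᵥ w = lam • w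

/- ### Auxiliary lemmas -/

lemma skew_psi_eq (M : M3) : skew (psi M) = (2⁻¹:ℝ) • (M - Mᵀ) := by
  ext i j
  fin_cases i <;> fin_cases j <;> simp [skew, psi] <;> ring

lemma crossId (x y : V3) : skew y *ᵥ (skew x *ᵥ y) = (y ⬝ᵥ y) • x - (y ⬝ᵥ x) • y := by
  funext i
  fin_cases i <;>
    simp [skew, Matrix.mulVec, dotProduct, Fin.sum_univ_three, Pi.smul_apply] <;> ring

lemma skew_smul' (a : ℝ) (x : V3) : skew (a • x) = a • skew x := by
  ext i j
  fin_cases i <;> fin_cases j <;> simp [skew] <;> ring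

lemma adj3 (M : M3) : M.adjugate = M*M - M.trace • M + (M.adjugate).trace • 1 := by
  ext i j
  fin_cases i <;> fin_cases j <;>
    simp [Matrix.adjugate_fin_three, Matrix.trace_fin_three, Matrix.mul_apply,
      Fin.sum_univ_three, Matrix.one_apply] <;> ring

lemma dot_self_pos {x : V3} (hx : x ≠ 0) : 0 < x ⬝ᵥ x := by
  obtain ⟨i, hi⟩ := Function.ne_iff.mp hx
  simp only [Pi.zero_apply] at hi
  exact Finset.sum_pos' (fun j _ => mul_self_nonneg _)
    ⟨i, Finset.mem_univ i, mul_self_pos.mpr hi⟩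

lemma quad_bound (H : M3) (hH : H.IsHermitian) (lam : ℝ)
    (h0 : ∀ i, 0 ≤ hH.eigenvalues i) (h1 : ∀ i, hH.eigenvalues i ≤ lam) (x : V3) :
    (H *ᵥ x) ⬝ᵥ (H *ᵥ x) ≤ lam ^ 2 * (x ⬝ᵥ x) := by
  set U : M3 := (hH.eigenvectorUnitary : M3) with hU
  have hsU : star U * U = 1 := Unitary.coe_star_mul_self hH.eigenvectorUnitary
  have hUs : U * star U = 1 := Unitary.coe_mul_star_self hH.eigenvectorUnitary
  set d := hH.eigenvalues with hd
  have hspec : H = U * diagonal d * star U := by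
    have := hH.spectral_theorem
    simpa [RCLike.ofReal_real_eq_id, Function.id_comp] using this
  set y := star U *ᵥ x with hy
  have hUt : Uᵀ = star U := by
    rw [Matrix.star_eq_conjTranspose, Matrix.conjTranspose_eq_transpose_of_trivial]
  have hiso : ∀ a : V3, (U *ᵥ a) ⬝ᵥ (U *ᵥ a) = a ⬝ᵥ a := by
    intro a
    rw [dotProduct_mulVec, ← Matrix.mulVec_transpose, mulVec_mulVec, hUt, hsU, one_mulVec]
  have hxy : U *ᵥ y = x := by rw [hy, mulVec_mulVec, hUs, one_mulVec]
  have hz : H *ᵥ x = U *ᵥ (diagonal d *ᵥ y) := by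
    rw [hspec, hy, mulVec_mulVec, mulVec_mulVec, Matrix.mul_assoc]
  have hsq : ∀ i, (d i) ^ 2 ≤ lam ^ 2 := fun i => pow_le_pow_left₀ (h0 i) (h1 i) 2
  calc (H *ᵥ x) ⬝ᵥ (H *ᵥ x) = (diagonal d *ᵥ y) ⬝ᵥ (diagonal d *ᵥ y) := by
        rw [hz, hiso]
    _ ≤ lam ^ 2 * (y ⬝ᵥ y) := by
        simp only [dotProduct, Matrix.mulVec_diagonal, Fin.sum_univ_three]
        nlinarith only [hsq 0, hsq 1, hsq 2, sq_nonneg (y 0), sq_nonneg (y 1), sq_nonneg (y 2)]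
    _ = lam ^ 2 * (x ⬝ᵥ x) := by rw [← hxy, hiso]

set_option maxHeartbeats 1000000 in
lemma psiF (A : M3) (u : V3) (σ t : ℝ)
    (ha10 : A 1 0 = A 0 1) (ha20 : A 2 0 = A 0 2) (ha21 : A 2 1 = A 1 2) :
    psi (A * (((t-1)/2) • (1:M3) + ((3-t)/2) • vecMulVec u u + σ • skew u))
      = σ • (Abar A *ᵥ u) + ((3-t)/2) • (skew (Abar A *ᵥ u) *ᵥ u) := by
  funext i
  fin_cases i <;>
  · simp [psi, Abar, skew, Matrix.mul_apply, Matrix.mulVec, dotProduct,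
      Matrix.trace_fin_three, Fin.sum_univ_three, Matrix.vecMulVec_apply, Matrix.one_apply]
    simp only [ha10, ha20, ha21]
    ring

set_option maxHeartbeats 1000000 in
lemma sigma_c (u : V3) (σ t : ℝ) (hu' : u 0*u 0+u 1*u 1+u 2*u 2 = 1)
    (h3 : ((((t-1)/2) • (1:M3) + ((3-t)/2) • vecMulVec u u + σ • skew u)ᵀ *
           (((t-1)/2) • (1:M3) + ((3-t)/2) • vecMulVec u u + σ • skew u)).trace = 3) :
    σ^2 + ((t-1)/2)^2 = 1 := by
  simp only [Matrix.trace_fin_three, Matrix.mul_apply, Matrix.transpose_apply,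
    Fin.sum_univ_three] at h3
  simp [Matrix.vecMulVec_apply, Matrix.one_apply, skew, Matrix.add_apply,
    Matrix.smul_apply, smul_eq_mul] at h3
  linear_combination h3/2 - ((2*((t-1)/2)*((3-t)/2) + ((3-t)/2)^2*((u 0*u 0+u 1*u 1+u 2*u 2)+1) + 2*σ^2)/2) * hu'

set_option maxHeartbeats 1000000 in
lemma psidot (p u : V3) (σ t : ℝ) (hu' : u 0*u 0+u 1*u 1+u 2*u 2 = 1) :
    (σ • p + ((3-t)/2) • (skew p *ᵥ u)) ⬝ᵥ (σ • p + ((3-t)/2) • (skew p *ᵥ u))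
      = σ^2 * (p ⬝ᵥ p) + ((3-t)/2)^2 * ((p ⬝ᵥ p) - (p ⬝ᵥ u)^2) := by
  simp [dotProduct, skew, Matrix.mulVec, Fin.sum_univ_three]
  linear_combination (((3-t)/2)^2 * (p 0 * p 0 + p 1 * p 1 + p 2 * p 2)) * hu'

set_option maxHeartbeats 4000000 in
theorem psi_bound_on_SO3
    (A : M3) (hA : A.PosDef)
    (lamM : ℝ) (hM : IsEigen (Abar A) lamM)
    (hbound : ∀ lam : ℝ, IsEigen (Abar A) lam → lam ≤ lamM) :
    (∀ T ∈ SO3, psi (A * T) ⬝ᵥ psi (A * T) ≤ lamM ^ 2 * ((1 : M3) - T).trace) ∧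
    (∀ T ∈ SO3, enorm3 (psi (A * T)) ≤ 2 * lamM) := by
  -- symmetry of A
  have hAt : Aᵀ = A := by
    rw [← Matrix.conjTranspose_eq_transpose_of_trivial]; exact hA.1
  have ha10 : A 1 0 = A 0 1 := by
    have h := congrFun (congrFun hAt 0) 1; simpa using h
  have ha20 : A 2 0 = A 0 2 := by
    have h := congrFun (congrFun hAt 0) 2; simpa using h
  have ha21 : A 2 1 = A 1 2 := by
    have h := congrFun (congrFun hAt 1) 2; simpa using h
  -- Abar A is Hermitian
  have hAb : (Abar A).IsHermitian := by
    unfold Matrix.IsHermitian Abar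
    simp [Matrix.conjTranspose_smul, Matrix.conjTranspose_sub, Matrix.conjTranspose_one, hAt]
  -- Abar A is positive semidefinite (quadratic form)
  have hPSDq : ∀ x : V3, 0 ≤ x ⬝ᵥ (Abar A *ᵥ x) := by
    intro x
    have k0 := hA.posSemidef.dotProduct_mulVec_nonneg ![0, x 2, -(x 1)]
    have k1 := hA.posSemidef.dotProduct_mulVec_nonneg ![-(x 2), 0, x 0]
    have k2 := hA.posSemidef.dotProduct_mulVec_nonneg ![x 1, -(x 0), 0]
    simp only [star_trivial, dotProduct, Matrix.mulVec, Fin.sum_univ_three, Abar,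
      Matrix.trace_fin_three, Matrix.smul_apply, Matrix.sub_apply, Matrix.one_apply,
      smul_eq_mul, Matrix.cons_val_zero, Matrix.cons_val_one, Matrix.head_cons,
      Matrix.cons_val_two, Matrix.tail_cons, Pi.star_apply] at k0 k1 k2 ⊢
    norm_num [Fin.ext_iff, ha10, ha20, ha21] at k0 k1 k2 ⊢
    linarith only [k0, k1, k2]
  -- eigenvalue facts
  have hnorm : ∀ i, (⇑(hAb.eigenvectorBasis i) : V3) ⬝ᵥ ⇑(hAb.eigenvectorBasis i) = 1 := by
    intro i
    have h1 := orthonormal_iff_ite.mp hAb.eigenvectorBasis.orthonormal i i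
    simp only [if_pos rfl] at h1
    rw [EuclideanSpace.inner_eq_star_dotProduct] at h1
    simpa [PiLp.inner_apply, dotProduct, RCLike.inner_apply, starRingEnd_apply,
      star_trivial] using h1
  have hwne : ∀ i, (⇑(hAb.eigenvectorBasis i) : V3) ≠ 0 := by
    intro i h
    have := hnorm i
    rw [h] at this
    simp at this
  have heig0 : ∀ i, 0 ≤ hAb.eigenvalues i := by
    intro i
    have h := hPSDq ⇑(hAb.eigenvectorBasis i)
    rw [hAb.mulVec_eigenvectorBasis i, dotProduct_smul, hnorm i] at h
    simpa using h
  have heigle : ∀ i, hAb.eigenvalues i ≤ lamM := fun i =>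
    hbound _ ⟨⇑(hAb.eigenvectorBasis i), hwne i, hAb.mulVec_eigenvectorBasis i⟩
  -- lamM is nonnegative
  have hlam0 : 0 ≤ lamM := by
    obtain ⟨w0, hw0ne, hw0⟩ := hM
    have h := hPSDq w0
    rw [hw0, dotProduct_smul, smul_eq_mul] at h
    nlinarith only [h, dot_self_pos hw0ne]
  -- main estimate
  have hmain : ∀ T ∈ SO3, psi (A * T) ⬝ᵥ psi (A * T) ≤ lamM ^ 2 * ((1 : M3) - T).trace ∧
      ((1 : M3) - T).trace ≤ 4 := by
    rintro T ⟨hT1, hT2⟩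
    have hTTc : T * Tᵀ = 1 := mul_eq_one_comm.mp hT1
    -- rotation axis
    have hdet0 : (T - 1).det = 0 := by
      have h1 : Tᵀ * (T - 1) = 1 - Tᵀ := by rw [Matrix.mul_sub, hT1, Matrix.mul_one]
      have h2 : (T - 1).det = ((1 : M3) - Tᵀ).det := by
        rw [← h1, Matrix.det_mul, Matrix.det_transpose, hT2, one_mul]
      have h3 : ((1 : M3) - Tᵀ).det = ((1 : M3) - T).det := by
        rw [← Matrix.det_transpose ((1:M3) - T), Matrix.transpose_sub, Matrix.transpose_one]
      have h4 : ((1 : M3) - T).det = - (T - 1).det := by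
        have h5 : (1 : M3) - T = (-1 : ℝ) • (T - 1) := by simp [smul_sub]; abel
        rw [h5, Matrix.det_smul]
        norm_num
      linarith [h2, h3, h4]
    obtain ⟨w, hw0, hww⟩ := (Matrix.exists_mulVec_eq_zero_iff).mpr hdet0
    have hTw : T *ᵥ w = w := by
      have h := hww
      rw [Matrix.sub_mulVec, Matrix.one_mulVec, sub_eq_zero] at h
      exact h
    have hwpos := dot_self_pos hw0
    obtain ⟨u, hudef⟩ : ∃ u : V3, u = (Real.sqrt (w ⬝ᵥ w))⁻¹ • w := ⟨_, rfl⟩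
    have hrpos : 0 < Real.sqrt (w ⬝ᵥ w) := Real.sqrt_pos.mpr hwpos
    have hu : u ⬝ᵥ u = 1 := by
      rw [hudef, smul_dotProduct, dotProduct_smul, smul_eq_mul, smul_eq_mul]
      have hr := Real.mul_self_sqrt hwpos.le
      set r := Real.sqrt (w ⬝ᵥ w) with hrdef
      rw [← hr]
      field_simp
    have hu' : u 0 * u 0 + u 1 * u 1 + u 2 * u 2 = 1 := by
      simpa [dotProduct, Fin.sum_univ_three] using hu
    have hTu : T *ᵥ u = u := by rw [hudef, Matrix.mulVec_smul, hTw]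
    have hTtu : Tᵀ *ᵥ u = u := by
      rw [← hTu, Matrix.mulVec_mulVec, hT1, Matrix.one_mulVec, hTu]
    -- Cayley–Hamilton via adjugate
    have hadj : T.adjugate = Tᵀ := by
      have h := Matrix.mul_adjugate T
      rw [hT2, one_smul] at h
      calc T.adjugate = (Tᵀ * T) * T.adjugate := by rw [hT1, Matrix.one_mul]
        _ = Tᵀ * (T * T.adjugate) := by rw [Matrix.mul_assoc]
        _ = Tᵀ := by rw [h, Matrix.mul_one]
    obtain ⟨t, ht⟩ : ∃ t : ℝ, t = T.trace := ⟨_, rfl⟩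
    have hCH : Tᵀ = T * T - t • T + t • (1 : M3) := by
      have h := adj3 T
      rw [hadj, Matrix.trace_transpose, ← ht] at h
      exact h
    have e1 : T * T = Tᵀ + t • T - t • (1 : M3) := by rw [hCH]; abel
    have e2 : Tᵀ * Tᵀ = T + t • Tᵀ - t • (1 : M3) := by
      have h := congrArg Matrix.transpose e1
      rw [Matrix.transpose_mul] at h
      rw [h]
      simp [Matrix.transpose_add, Matrix.transpose_sub, Matrix.transpose_smul,
        Matrix.transpose_one, Matrix.transpose_transpose]
    -- symmetric part of T
    obtain ⟨B, hB⟩ : ∃ B : M3, B = (2⁻¹ : ℝ) • (T + Tᵀ) := ⟨_, rfl⟩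
    have hBsym : Bᵀ = B := by
      rw [hB, Matrix.transpose_smul, Matrix.transpose_add, Matrix.transpose_transpose, add_comm]
    have hB2 : B * B = ((t+1)/2) • B + ((1-t)/2) • (1 : M3) := by
      rw [hB]
      rw [smul_mul_assoc, mul_smul_comm, Matrix.add_mul, Matrix.mul_add, Matrix.mul_add,
        e1, e2, hT1, hTTc]
      module
    have hBu : B *ᵥ u = u := by
      rw [hB, Matrix.smul_mulVec, Matrix.add_mulVec, hTu, hTtu]
      funext i; simp; ring
    obtain ⟨P, hP⟩ : ∃ P : M3, P = vecMulVec u u := ⟨_, rfl⟩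
    have hPt : Pᵀ = P := by
      ext i j; simp [hP, Matrix.vecMulVec_apply, mul_comm]
    have hPP : P * P = P := by
      ext i j
      simp [hP, Matrix.mul_apply, Matrix.vecMulVec_apply, Fin.sum_univ_three]
      linear_combination (u i * u j) * hu'
    have hBu' : ∀ i, B i 0 * u 0 + B i 1 * u 1 + B i 2 * u 2 = u i := by
      intro i
      simpa [Matrix.mulVec, dotProduct, Fin.sum_univ_three] using congrFun hBu i
    have hBP : B * P = P := by
      ext i j
      simp [hP, Matrix.mul_apply, Matrix.vecMulVec_apply, Fin.sum_univ_three]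
      linear_combination (u j) * hBu' i
    have hPB : P * B = P := by
      calc P * B = Pᵀ * Bᵀ := by rw [hPt, hBsym]
        _ = (B * P)ᵀ := by rw [Matrix.transpose_mul]
        _ = Pᵀ := by rw [hBP]
        _ = P := hPt
    -- the defect matrix D vanishes
    obtain ⟨D, hD⟩ : ∃ D : M3, D = B - ((t-1)/2) • 1 - ((3-t)/2) • P := ⟨_, rfl⟩
    have hDsym : Dᵀ = D := by
      rw [hD, Matrix.transpose_sub, Matrix.transpose_sub, Matrix.transpose_smul,
        Matrix.transpose_smul, Matrix.transpose_one, hBsym, hPt]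
    have hDD : D * D = ((3-t)/2) • D := by
      rw [hD]
      simp only [Matrix.sub_mul, Matrix.mul_sub, smul_mul_assoc, mul_smul_comm,
        Matrix.one_mul, Matrix.mul_one, hB2, hBP, hPB, hPP]
      module
    have hBtr : B.trace = t := by
      rw [hB, Matrix.trace_smul, Matrix.trace_add, Matrix.trace_transpose, ht]
      simp; ring
    have hPtr : P.trace = 1 := by
      rw [hP]
      simp [Matrix.trace_fin_three, Matrix.vecMulVec_apply]
      linear_combination hu
    have hDtr : D.trace = 0 := by
      rw [hD, Matrix.trace_sub, Matrix.trace_sub, Matrix.trace_smul, Matrix.trace_smul,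
        Matrix.trace_one, hBtr, hPtr]
      simp; ring
    have hDDtr : (D * D).trace = 0 := by
      rw [hDD, Matrix.trace_smul, hDtr, smul_zero]
    have hs10 : D 1 0 = D 0 1 := by
      have h := congrFun (congrFun hDsym 0) 1
      simpa using h
    have hs20 : D 2 0 = D 0 2 := by
      have h := congrFun (congrFun hDsym 0) 2
      simpa using h
    have hs21 : D 2 1 = D 1 2 := by
      have h := congrFun (congrFun hDsym 1) 2
      simpa using h
    have h9 : D 0 0 * D 0 0 + D 0 1 * D 0 1 + D 0 2 * D 0 2 + D 0 1 * D 0 1 + D 1 1 * D 1 1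
        + D 1 2 * D 1 2 + D 0 2 * D 0 2 + D 1 2 * D 1 2 + D 2 2 * D 2 2 = 0 := by
      have h := hDDtr
      simp only [Matrix.trace_fin_three, Matrix.mul_apply, Fin.sum_univ_three] at h
      rw [hs10, hs20, hs21] at h
      linarith only [h]
    have n00 := mul_self_nonneg (D 0 0)
    have n01 := mul_self_nonneg (D 0 1)
    have n02 := mul_self_nonneg (D 0 2)
    have n11 := mul_self_nonneg (D 1 1)
    have n12 := mul_self_nonneg (D 1 2)
    have n22 := mul_self_nonneg (D 2 2)
    have e00 : D 0 0 = 0 := mul_self_eq_zero.mp (by linarith only [h9, n00, n01, n02, n11, n12, n22])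
    have e01 : D 0 1 = 0 := mul_self_eq_zero.mp (by linarith only [h9, n00, n01, n02, n11, n12, n22])
    have e02 : D 0 2 = 0 := mul_self_eq_zero.mp (by linarith only [h9, n00, n01, n02, n11, n12, n22])
    have e11 : D 1 1 = 0 := mul_self_eq_zero.mp (by linarith only [h9, n00, n01, n02, n11, n12, n22])
    have e12 : D 1 2 = 0 := mul_self_eq_zero.mp (by linarith only [h9, n00, n01, n02, n11, n12, n22])
    have e22 : D 2 2 = 0 := mul_self_eq_zero.mp (by linarith only [h9, n00, n01, n02, n11, n12, n22])
    have hD0 : D = 0 := by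
      ext i j
      fin_cases i <;> fin_cases j <;>
        simp [e00, e01, e02, e11, e12, e22, hs10, hs20, hs21]
    have hBval : B = ((t-1)/2) • (1 : M3) + ((3-t)/2) • P := by
      have h := hD0
      rw [hD, sub_sub, sub_eq_zero] at h
      exact h
    -- Rodrigues form of T
    have hSk : skew (psi T) = (2⁻¹:ℝ) • (T - Tᵀ) := skew_psi_eq T
    have hs0 : skew (psi T) *ᵥ u = 0 := by
      rw [hSk, Matrix.smul_mulVec, Matrix.sub_mulVec, hTu, hTtu, sub_self, smul_zero]
    obtain ⟨σ, hσ⟩ : ∃ σ : ℝ, σ = u ⬝ᵥ psi T := ⟨_, rfl⟩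
    have hpsiT : psi T = σ • u := by
      have h := crossId (psi T) u
      rw [hs0, Matrix.mulVec_zero, hu, one_smul, ← hσ] at h
      exact sub_eq_zero.mp h.symm
    have hTform : T = ((t-1)/2) • (1:M3) + ((3-t)/2) • vecMulVec u u + σ • skew u := by
      have h1 : T = B + skew (psi T) := by
        rw [hSk, hB]; module
      rw [h1, hpsiT, skew_smul', hBval, hP]
    -- trace identities
    have htr : ((1 : M3) - T).trace = 3 - t := by
      rw [Matrix.trace_sub, Matrix.trace_one, ht]
      norm_num
    -- sin²+cos² = 1
    have h3 : ((((t-1)/2) • (1:M3) + ((3-t)/2) • vecMulVec u u + σ • skew u)ᵀ *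
           (((t-1)/2) • (1:M3) + ((3-t)/2) • vecMulVec u u + σ • skew u)).trace = 3 := by
      rw [← hTform, hT1, Matrix.trace_one]
      norm_num
    have hσc : σ^2 + ((t-1)/2)^2 = 1 := sigma_c u σ t hu' h3
    clear h3
    -- formula for psi (A * T)
    have hpsiF0 : psi (A * T) = σ • (Abar A *ᵥ u) + ((3-t)/2) • (skew (Abar A *ᵥ u) *ᵥ u) := by
      rw [hTform]
      exact psiF A u σ t ha10 ha20 ha21
    obtain ⟨p, hp⟩ : ∃ p : V3, p = Abar A *ᵥ u := ⟨_, rfl⟩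
    have hpsiF : psi (A * T) = σ • p + ((3-t)/2) • (skew p *ᵥ u) := by
      rw [hp]; exact hpsiF0
    have hψψ : psi (A * T) ⬝ᵥ psi (A * T)
        = σ^2 * (p ⬝ᵥ p) + ((3-t)/2)^2 * ((p ⬝ᵥ p) - (p ⬝ᵥ u)^2) := by
      rw [hpsiF]
      exact psidot p u σ t hu'
    -- the operator bound
    have hquad : p ⬝ᵥ p ≤ lamM ^ 2 := by
      have h := quad_bound (Abar A) hAb lamM heig0 heigle u
      rw [hu, mul_one] at h
      rw [hp]
      exact h
    have hcoeff : σ^2 + ((3-t)/2)^2 = 3 - t := by linear_combination hσc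
    constructor
    · rw [htr, hψψ]
      have hb1 : σ^2 * (p ⬝ᵥ p) ≤ σ^2 * lamM^2 :=
        mul_le_mul_of_nonneg_left hquad (sq_nonneg σ)
      have hb2 : ((3-t)/2)^2 * ((p ⬝ᵥ p) - (p ⬝ᵥ u)^2) ≤ ((3-t)/2)^2 * lamM^2 :=
        mul_le_mul_of_nonneg_left (by linarith only [hquad, sq_nonneg (p ⬝ᵥ u)]) (sq_nonneg ((3-t)/2))
      have hb3 : σ^2 * lamM^2 + ((3-t)/2)^2 * lamM^2 = lamM^2 * (3 - t) := by
        linear_combination lamM^2 * hcoeff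
      linarith only [hb1, hb2, hb3]
    · rw [htr]
      linarith only [hσc, sq_nonneg σ, sq_nonneg (t+1)]
  constructor
  · exact fun T hT => (hmain T hT).1
  · intro T hT
    obtain ⟨k1, k2⟩ := hmain T hT
    have h4 : psi (A * T) ⬝ᵥ psi (A * T) ≤ (2 * lamM)^2 := by
      nlinarith only [k1, k2, sq_nonneg lamM]
    have h2l : 0 ≤ 2 * lamM := by linarith [hlam0]
    calc enorm3 (psi (A * T)) = Real.sqrt (psi (A * T) ⬝ᵥ psi (A * T)) := rfl
      _ ≤ Real.sqrt ((2 * lamM)^2) := Real.sqrt_le_sqrt h4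
      _ = 2 * lamM := Real.sqrt_sq h2l
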